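/- Let W₀, W₁ be pmfs on finite Z with W₁ ≪ W₀, and set W_α = αW₁ + (1−α)W₀. Then the map α ↦ D(W_α ‖ W₀) is continuous on [0,1], equals 0 at α = 0, and satisfies D(W_α‖W₀)/α² → χ₂(W₁‖W₀)/2 as α → 0⁺. -/

import Mathlib

open Filter Real

noncomputable def Gfun (x : ℝ) : ℝ := (1 + x) * Real.log (1 + x) - x

lemma Gfun_zero : Gfun 0 = 0 := by simp [Gfun]

lemma Gfun_cont : Continuous Gfun := by
  have h1 : Continuous fun x : ℝ => (1 + x) * Real.log (1 + x) :=
    Real.continuous_mul_log.comp (continuous_const.add continuous_id)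
  exact h1.sub continuous_id

lemma keyG : Tendsto (fun x : ℝ => Gfun x / x ^ 2) (nhdsWithin 0 {(0:ℝ)}ᶜ) (nhds (1/2)) := by
  have hmem : ∀ᶠ x : ℝ in nhdsWithin 0 {(0:ℝ)}ᶜ, x ∈ Set.Ioo (-(1:ℝ)/2) (1/2) := by
    filter_upwards [eventually_nhdsWithin_of_eventually_nhds
      (Ioo_mem_nhds (show -(1:ℝ)/2 < 0 by norm_num) (show (0:ℝ) < 1/2 by norm_num))] with x hx
      using hx
  have hne : ∀ᶠ x : ℝ in nhdsWithin 0 {(0:ℝ)}ᶜ, x ≠ 0 := self_mem_nhdsWithin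
  apply HasDerivAt.lhopital_zero_nhdsNE (f' := fun x => Real.log (1+x)) (g' := fun x => 2*x)
  · filter_upwards [hmem] with x hx
    have h1 : (0:ℝ) < 1 + x := by
      have := hx.1; linarith
    have haff : HasDerivAt (fun y : ℝ => 1 + y) 1 x := by
      simpa using (hasDerivAt_id x).const_add (1:ℝ)
    have hlog : HasDerivAt (fun y : ℝ => Real.log (1+y)) ((1+x)⁻¹ * 1) x :=
      (Real.hasDerivAt_log h1.ne').comp x haff
    have : HasDerivAt (fun y : ℝ => (1+y) * Real.log (1+y) - y)
        (1 * Real.log (1+x) + (1+x) * ((1+x)⁻¹ * 1) - 1) x :=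
      ((haff.mul hlog)).sub (hasDerivAt_id x)
    convert this using 1
    · rfl
    field_simp
    ring
  · filter_upwards with x
    simpa using (hasDerivAt_pow 2 x)
  · filter_upwards [hne] with x hx
    simpa using hx
  · apply tendsto_nhdsWithin_of_tendsto_nhds
    have := Gfun_cont.tendsto 0
    rw [Gfun_zero] at this
    exact this
  · apply tendsto_nhdsWithin_of_tendsto_nhds
    simpa using (continuous_pow 2 (M := ℝ)).tendsto 0
  · have haff : HasDerivAt (fun y : ℝ => 1 + y) 1 0 := by
      simpa using (hasDerivAt_id (0:ℝ)).const_add (1:ℝ)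
    have hs : HasDerivAt (fun y : ℝ => Real.log (1+y)) 1 0 := by
      have h := (Real.hasDerivAt_log (show (1:ℝ)+0 ≠ 0 by norm_num)).comp (0:ℝ)
        (by simpa using haff)
      simpa [Function.comp_def] using h
    have hslope := hasDerivAt_iff_tendsto_slope.1 hs
    have h2 : Tendsto (fun x : ℝ => (1/2) * slope (fun y => Real.log (1+y)) 0 x)
        (nhdsWithin 0 {(0:ℝ)}ᶜ) (nhds ((1/2) * 1)) := hslope.const_mul _
    norm_num at h2
    convert h2 using 2 with x
    simp [slope_def_field]
    ring

noncomputable def KL {Z : Type*} [Fintype Z] (P Q : Z → ℝ) : ℝ :=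
  ∑ z, P z * Real.log (P z / Q z)

noncomputable def chi2 {Z : Type*} [Fintype Z] (P Q : Z → ℝ) : ℝ :=
  ∑ z, (P z - Q z)^2 / Q z

def IsPMF {Z : Type*} [Fintype Z] (P : Z → ℝ) : Prop :=
  (∀ z, 0 ≤ P z) ∧ ∑ z, P z = 1

/-- absolute continuity `P ≪ Q` for pmfs on a finite alphabet -/
def AC {Z : Type*} [Fintype Z] (P Q : Z → ℝ) : Prop := ∀ z, Q z = 0 → P z = 0

/-- Master rewrite: `KL(W_α‖W0) = Σ_z W0 z · G(α·(W1 z − W0 z)/W0 z)`. -/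
lemma KL_master {Z : Type*} [Fintype Z] (W0 W1 : Z → ℝ)
    (hW0 : IsPMF W0) (hW1 : IsPMF W1) (hAC : AC W1 W0) (α : ℝ) :
    KL (fun z => α * W1 z + (1 - α) * W0 z) W0
      = ∑ z, W0 z * Gfun (α * (W1 z - W0 z) / W0 z) := by
  have hterm : ∀ z : Z,
      (α * W1 z + (1 - α) * W0 z) * Real.log ((α * W1 z + (1 - α) * W0 z) / W0 z)
        = W0 z * Gfun (α * (W1 z - W0 z) / W0 z) + α * (W1 z - W0 z) := by
    intro z
    by_cases hq : W0 z = 0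
    · have hp := hAC z hq
      simp [hq, hp, Gfun]
    · have key : (α * W1 z + (1 - α) * W0 z) / W0 z = 1 + α * (W1 z - W0 z) / W0 z := by
        field_simp
        ring
      have e1 : W0 z * (α * (W1 z - W0 z) / W0 z) = α * (W1 z - W0 z) := by
        field_simp
      have e2 : W0 z * (1 + α * (W1 z - W0 z) / W0 z) = α * W1 z + (1 - α) * W0 z := by
        field_simp
        ring
      rw [key, Gfun]
      linear_combination (-(Real.log (1 + α * (W1 z - W0 z) / W0 z))) * e2 + e1
  unfold KL
  rw [Finset.sum_congr rfl (fun z _ => hterm z), Finset.sum_add_distrib]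
  have : ∑ z : Z, α * (W1 z - W0 z) = 0 := by
    simp only [mul_sub, Finset.sum_sub_distrib, ← Finset.mul_sum, hW0.2, hW1.2]
    ring
  rw [this, add_zero]

/-- `α ↦ D(αW₁+(1−α)W₀ ‖ W₀)` is continuous on `[0,1]`, vanishes
at `α = 0`, and `D(W_α‖W₀)/α² → χ₂(W₁‖W₀)/2` as `α → 0⁺`. -/
theorem stmt16 {Z : Type*} [Fintype Z] (W0 W1 : Z → ℝ)
    (hW0 : IsPMF W0) (hW1 : IsPMF W1) (hAC : AC W1 W0) :
    ContinuousOn (fun α : ℝ => KL (fun z => α * W1 z + (1 - α) * W0 z) W0)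
        (Set.Icc 0 1) ∧
    KL (fun z => (0:ℝ) * W1 z + (1 - 0) * W0 z) W0 = 0 ∧
    Tendsto (fun α : ℝ => KL (fun z => α * W1 z + (1 - α) * W0 z) W0 / α ^ 2)
      (nhdsWithin 0 (Set.Ioi 0)) (nhds (chi2 W1 W0 / 2)) := by
  refine ⟨?_, ?_, ?_⟩
  · -- continuity
    have hc : Continuous (fun α : ℝ => KL (fun z => α * W1 z + (1 - α) * W0 z) W0) := by
      unfold KL
      apply continuous_finset_sum
      intro z _
      by_cases hq : W0 z = 0
      · have hp := hAC z hq
        simp only [hq, hp, mul_zero, add_zero, zero_mul]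
        exact continuous_const
      · have hP : Continuous (fun α : ℝ => α * W1 z + (1 - α) * W0 z) := by continuity
        have hf : Continuous (fun α : ℝ =>
            (α * W1 z + (1 - α) * W0 z) * Real.log (α * W1 z + (1 - α) * W0 z)
              - (α * W1 z + (1 - α) * W0 z) * Real.log (W0 z)) :=
          (Real.continuous_mul_log.comp hP).sub (hP.mul continuous_const)
        apply hf.congr
        intro α
        by_cases hP0 : α * W1 z + (1 - α) * W0 z = 0
        · simp [hP0]
        · rw [Real.log_div hP0 hq]
          ring
    exact hc.continuousOn
  · -- value at 0
    have := KL_master W0 W1 hW0 hW1 hAC 0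
    simp only [zero_mul, zero_div, Gfun_zero, mul_zero] at this
    simpa using this
  · -- the limit
    have hrw : ∀ α : ℝ, KL (fun z => α * W1 z + (1 - α) * W0 z) W0 / α ^ 2
        = ∑ z, W0 z * Gfun (α * (W1 z - W0 z) / W0 z) / α ^ 2 := by
      intro α
      rw [KL_master W0 W1 hW0 hW1 hAC α, Finset.sum_div]
    simp only [hrw]
    have hchi : chi2 W1 W0 / 2 = ∑ z : Z, (W1 z - W0 z) ^ 2 / W0 z / 2 := by
      rw [chi2, Finset.sum_div]
    rw [hchi]
    apply tendsto_finset_sum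
    intro z _
    by_cases hq : W0 z = 0
    · have hp := hAC z hq
      simp only [hq, hp, zero_mul, zero_div, sub_zero]
      simpa [hp] using (tendsto_const_nhds :
        Tendsto (fun _ : ℝ => (0:ℝ)) (nhdsWithin 0 (Set.Ioi 0)) (nhds 0))
    · by_cases hd : W1 z - W0 z = 0
      · simp only [hd, mul_zero, zero_div, Gfun_zero, ne_eq, OfNat.ofNat_ne_zero,
          not_false_eq_true, zero_pow]
        simpa using (tendsto_const_nhds :
          Tendsto (fun _ : ℝ => (0:ℝ)) (nhdsWithin 0 (Set.Ioi 0)) (nhds 0))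
      · -- main case
        have hcomp : Tendsto (fun α : ℝ => α * (W1 z - W0 z) / W0 z)
            (nhdsWithin 0 (Set.Ioi 0)) (nhdsWithin 0 {(0:ℝ)}ᶜ) := by
          rw [tendsto_nhdsWithin_iff]
          constructor
          · have h0 : Tendsto (fun α : ℝ => α * (W1 z - W0 z) / W0 z) (nhds 0)
                (nhds (0 * (W1 z - W0 z) / W0 z)) :=
              Continuous.tendsto (by continuity) 0
            simp only [zero_mul, zero_div] at h0
            exact h0.mono_left nhdsWithin_le_nhds
          · filter_upwards [self_mem_nhdsWithin] with α hα
            have : α ≠ 0 := ne_of_gt hα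
            exact div_ne_zero (mul_ne_zero this hd) hq
        have h1 : Tendsto (fun α : ℝ =>
            Gfun (α * (W1 z - W0 z) / W0 z) / (α * (W1 z - W0 z) / W0 z) ^ 2)
            (nhdsWithin 0 (Set.Ioi 0)) (nhds (1/2)) := keyG.comp hcomp
        have h2 := h1.const_mul ((W1 z - W0 z) ^ 2 / W0 z)
        have heq : ∀ᶠ α : ℝ in nhdsWithin 0 (Set.Ioi 0),
            (W1 z - W0 z) ^ 2 / W0 z *
              (Gfun (α * (W1 z - W0 z) / W0 z) / (α * (W1 z - W0 z) / W0 z) ^ 2)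
              = W0 z * Gfun (α * (W1 z - W0 z) / W0 z) / α ^ 2 := by
          filter_upwards [self_mem_nhdsWithin] with α hα
          have hα0 : α ≠ 0 := ne_of_gt hα
          field_simp
        have := h2.congr' heq
        convert this using 2
        ring
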